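/- (Corollary 4 of the paper, channel-independent form.) Under the secrecy-code setup, with I_total := I((V_1,…,V_n); Z), the following two-sided bound holds: I_total − r − Σ_{i∈B} C_i ≤ I(V_A; Z | V_B) ≤ I_total − r + Σ_{l∈R} (1 − C_l), where C_i := I(V_i; (Z, V_{{1,…,i−1}})) and r = |R|. -/

import Mathlib

open scoped Classical

noncomputable section

/-- `p` is a probability mass function on the finite sample space `Ω`. -/
def IsPMF {Ω : Type} [Fintype Ω] (p : Ω → ℝ) : Prop :=
  (∀ ω, 0 ≤ p ω) ∧ ∑ ω, p ω = 1

/-- `P(X = x)`: the probability of the event `{X = x}` under the pmf `p`. -/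
def prob {Ω : Type} [Fintype Ω] (p : Ω → ℝ) {α : Type} (X : Ω → α) (x : α) : ℝ :=
  ∑ ω, if X ω = x then p ω else 0

/-- Shannon entropy of `X` in bits (logarithm base 2). -/
def entropy {Ω : Type} [Fintype Ω] (p : Ω → ℝ) {α : Type} [Fintype α] (X : Ω → α) : ℝ :=
  -∑ x, prob p X x * Real.logb 2 (prob p X x)

/-- Mutual information `I(X;Y) = H(X) + H(Y) - H((X,Y))` in bits. -/
def mutInfo {Ω : Type} [Fintype Ω] (p : Ω → ℝ) {α β : Type} [Fintype α] [Fintype β]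
    (X : Ω → α) (Y : Ω → β) : ℝ :=
  entropy p X + entropy p Y - entropy p fun ω => (X ω, Y ω)

/-- Conditional mutual information
`I(X;Y∣W) = H((X,W)) + H((Y,W)) - H((X,Y,W)) - H(W)` in bits. -/
def condMutInfo {Ω : Type} [Fintype Ω] (p : Ω → ℝ) {α β γ : Type}
    [Fintype α] [Fintype β] [Fintype γ] (X : Ω → α) (Y : Ω → β) (W : Ω → γ) : ℝ :=
  entropy p (fun ω => (X ω, W ω)) + entropy p (fun ω => (Y ω, W ω))
    - entropy p (fun ω => (X ω, Y ω, W ω)) - entropy p W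

namespace S5
variable {Ω : Type} [Fintype Ω] {α β γ : Type} (p : Ω → ℝ)

lemma sum_prob_mul [Fintype α] (X : Ω → α) (f : α → ℝ) :
    ∑ x, prob p X x * f x = ∑ ω, p ω * f (X ω) := by
  unfold prob
  simp only [Finset.sum_mul, ite_mul, zero_mul]
  rw [Finset.sum_comm]
  refine Finset.sum_congr rfl fun ω _ => ?_
  simp

lemma entropy_eq_sum_omega [Fintype α] (X : Ω → α) :
    entropy p X = -∑ ω, p ω * Real.logb 2 (prob p X (X ω)) := by
  unfold entropy
  rw [sum_prob_mul p X (fun x => Real.logb 2 (prob p X x))]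

lemma prob_nonneg (hp0 : ∀ ω, 0 ≤ p ω) (X : Ω → α) (x : α) : 0 ≤ prob p X x := by
  refine Finset.sum_nonneg fun ω _ => ?_
  split <;> simp [hp0 ω]

lemma self_le_prob (hp0 : ∀ ω, 0 ≤ p ω) (X : Ω → α) (ω : Ω) : p ω ≤ prob p X (X ω) := by
  have := Finset.single_le_sum (f := fun ω' => if X ω' = X ω then p ω' else 0)
    (fun ω' _ => by split <;> simp [hp0 ω']) (Finset.mem_univ ω)
  simpa [prob] using this

lemma sum_prob_eq_one [Fintype α] (hp : IsPMF p) (X : Ω → α) : ∑ x, prob p X x = 1 := by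
  have := sum_prob_mul p X (fun _ => 1)
  simpa [hp.2] using this

lemma prob_pair_le_right (hp0 : ∀ ω, 0 ≤ p ω) (X : Ω → α) (W : Ω → γ) (x : α) (w : γ) :
    prob p (fun ω => (X ω, W ω)) (x, w) ≤ prob p W w := by
  refine Finset.sum_le_sum fun ω _ => ?_
  dsimp only
  by_cases h : (X ω, W ω) = (x, w)
  · rw [Prod.mk.injEq] at h
    simp [h.1, h.2]
  · simp only [if_neg h]
    split <;> simp [hp0 ω]

lemma sum_prob_pair_fst [Fintype α] (X : Ω → α) (W : Ω → γ) (w : γ) :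
    ∑ x, prob p (fun ω => (X ω, W ω)) (x, w) = prob p W w := by
  unfold prob
  rw [Finset.sum_comm]
  refine Finset.sum_congr rfl fun ω _ => ?_
  by_cases h : W ω = w
  · simp [Prod.ext_iff, h]
  · simp [Prod.ext_iff, h]

lemma entropy_submodular [Fintype α] [Fintype β] [Fintype γ] (hp : IsPMF p)
    (X : Ω → α) (Y : Ω → β) (W : Ω → γ) :
    entropy p (fun ω => (X ω, Y ω, W ω)) + entropy p W
      ≤ entropy p (fun ω => (X ω, W ω)) + entropy p (fun ω => (Y ω, W ω)) := by
  classical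
  set qa : α × γ → ℝ := prob p (fun ω => (X ω, W ω)) with hqa
  set qb : β × γ → ℝ := prob p (fun ω => (Y ω, W ω)) with hqb
  set qc : α × β × γ → ℝ := prob p (fun ω => (X ω, Y ω, W ω)) with hqc
  set qd : γ → ℝ := prob p W with hqd
  set f : α × β × γ → ℝ := fun t => qa (t.1, t.2.2) * qb t.2 / (qc t * qd t.2.2) with hf
  have hlog2 : (0:ℝ) < Real.log 2 := Real.log_pos one_lt_two
  have hterm : ∀ t : α × β × γ, qc t * f t ≤ qa (t.1, t.2.2) * qb t.2 / qd t.2.2 := by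
    rintro ⟨x, y, w⟩
    have hfv : f (x, y, w) = qa (x, w) * qb (y, w) / (qc (x, y, w) * qd w) := rfl
    by_cases h0 : qc (x, y, w) = 0
    · rw [h0, zero_mul]
      exact div_nonneg (mul_nonneg (prob_nonneg p hp.1 _ _) (prob_nonneg p hp.1 _ _))
        (prob_nonneg p hp.1 _ _)
    · have hcpos : 0 < qc (x, y, w) := lt_of_le_of_ne (prob_nonneg p hp.1 _ _) (Ne.symm h0)
      have hcd : qc (x, y, w) ≤ qd w := by
        calc qc (x, y, w) ≤ qb (y, w) :=
              prob_pair_le_right p hp.1 X (fun ω => (Y ω, W ω)) x (y, w)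
        _ ≤ qd w := prob_pair_le_right p hp.1 Y W y w
      have hd0 : qd w ≠ 0 := ne_of_gt (lt_of_lt_of_le hcpos hcd)
      have : qc (x, y, w) * f (x, y, w) = qa (x, w) * qb (y, w) / qd w := by
        rw [hfv]; field_simp
      rw [this]
  have hsum1 : ∑ t : α × β × γ, qc t * f t ≤ 1 := by
    calc ∑ t : α × β × γ, qc t * f t
        ≤ ∑ t : α × β × γ, qa (t.1, t.2.2) * qb t.2 / qd t.2.2 :=
          Finset.sum_le_sum fun t _ => hterm t
      _ = ∑ w : γ, (∑ x : α, qa (x, w)) * (∑ y : β, qb (y, w)) / qd w := by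
          rw [Fintype.sum_prod_type, Finset.sum_comm]
          simp only [Fintype.sum_prod_type]
          rw [Finset.sum_comm]
          refine Finset.sum_congr rfl fun w _ => ?_
          simp only [← Finset.sum_div, ← Finset.sum_mul, ← Finset.mul_sum]
      _ = ∑ w : γ, qd w := by
          refine Finset.sum_congr rfl fun w _ => ?_
          rw [hqa, hqb, sum_prob_pair_fst, sum_prob_pair_fst, ← hqd]
          by_cases h : qd w = 0
          · simp [h]
          · field_simp
      _ = 1 := by rw [hqd]; exact sum_prob_eq_one p hp W
  have hsum0 : ∑ ω, p ω * f (X ω, Y ω, W ω) ≤ 1 := by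
    have := sum_prob_mul p (fun ω => (X ω, Y ω, W ω)) f
    rw [← hqc] at this
    rw [← this]
    exact hsum1
  have hsum2 : ∑ ω, p ω * Real.logb 2 (f (X ω, Y ω, W ω)) ≤ 0 := by
    have hb : ∀ ω, p ω * Real.logb 2 (f (X ω, Y ω, W ω))
        ≤ p ω * ((f (X ω, Y ω, W ω) - 1) / Real.log 2) := by
      intro ω
      rcases eq_or_lt_of_le (hp.1 ω) with h0 | h0
      · simp [← h0]
      · refine mul_le_mul_of_nonneg_left ?_ h0.le
        have h1 : 0 < qa (X ω, W ω) := lt_of_lt_of_le h0 (self_le_prob p hp.1 _ ω)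
        have h2 : 0 < qb (Y ω, W ω) := lt_of_lt_of_le h0 (self_le_prob p hp.1 _ ω)
        have h3 : 0 < qc (X ω, Y ω, W ω) := lt_of_lt_of_le h0 (self_le_prob p hp.1 _ ω)
        have h4 : 0 < qd (W ω) := lt_of_lt_of_le h0 (self_le_prob p hp.1 W ω)
        have hfpos : 0 < f (X ω, Y ω, W ω) := div_pos (mul_pos h1 h2) (mul_pos h3 h4)
        rw [Real.logb]
        gcongr
        exact Real.log_le_sub_one_of_pos hfpos
    calc ∑ ω, p ω * Real.logb 2 (f (X ω, Y ω, W ω))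
        ≤ ∑ ω, p ω * ((f (X ω, Y ω, W ω) - 1) / Real.log 2) :=
          Finset.sum_le_sum fun ω _ => hb ω
      _ = (∑ ω, p ω * f (X ω, Y ω, W ω) - 1) / Real.log 2 := by
          rw [Finset.sum_congr rfl (fun ω _ => show
            p ω * ((f (X ω, Y ω, W ω) - 1) / Real.log 2)
              = (p ω * f (X ω, Y ω, W ω) - p ω) / Real.log 2 by ring),
            ← Finset.sum_div, Finset.sum_sub_distrib, hp.2]
      _ ≤ 0 := by
          rw [div_nonpos_iff]
          right
          exact ⟨by linarith, hlog2.le⟩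
  have hsplit : ∀ ω, p ω * Real.logb 2 (qa (X ω, W ω)) + p ω * Real.logb 2 (qb (Y ω, W ω))
      - p ω * Real.logb 2 (qc (X ω, Y ω, W ω)) - p ω * Real.logb 2 (qd (W ω))
      = p ω * Real.logb 2 (f (X ω, Y ω, W ω)) := by
    intro ω
    rcases eq_or_lt_of_le (hp.1 ω) with h0 | h0
    · simp [← h0]
    · have h1 : 0 < qa (X ω, W ω) := lt_of_lt_of_le h0 (self_le_prob p hp.1 _ ω)
      have h2 : 0 < qb (Y ω, W ω) := lt_of_lt_of_le h0 (self_le_prob p hp.1 _ ω)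
      have h3 : 0 < qc (X ω, Y ω, W ω) := lt_of_lt_of_le h0 (self_le_prob p hp.1 _ ω)
      have h4 : 0 < qd (W ω) := lt_of_lt_of_le h0 (self_le_prob p hp.1 W ω)
      have hfv : f (X ω, Y ω, W ω)
          = qa (X ω, W ω) * qb (Y ω, W ω) / (qc (X ω, Y ω, W ω) * qd (W ω)) := rfl
      rw [hfv, Real.logb_div (ne_of_gt (mul_pos h1 h2)) (ne_of_gt (mul_pos h3 h4)),
        Real.logb_mul (ne_of_gt h1) (ne_of_gt h2), Real.logb_mul (ne_of_gt h3) (ne_of_gt h4)]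
      ring
  have hXW := entropy_eq_sum_omega p (fun ω => (X ω, W ω))
  have hYW := entropy_eq_sum_omega p (fun ω => (Y ω, W ω))
  have hXYW := entropy_eq_sum_omega p (fun ω => (X ω, Y ω, W ω))
  have hW := entropy_eq_sum_omega p W
  rw [← hqa] at hXW
  rw [← hqb] at hYW
  rw [← hqc] at hXYW
  rw [← hqd] at hW
  rw [hXW, hYW, hXYW, hW]
  have expand : ∑ ω, p ω * Real.logb 2 (f (X ω, Y ω, W ω))
      = (∑ ω, p ω * Real.logb 2 (qa (X ω, W ω))) + (∑ ω, p ω * Real.logb 2 (qb (Y ω, W ω)))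
        - (∑ ω, p ω * Real.logb 2 (qc (X ω, Y ω, W ω)))
        - (∑ ω, p ω * Real.logb 2 (qd (W ω))) := by
    rw [← Finset.sum_add_distrib, ← Finset.sum_sub_distrib, ← Finset.sum_sub_distrib]
    exact (Finset.sum_congr rfl fun ω _ => hsplit ω).symm
  linarith [hsum2, expand.symm ▸ hsum2]

lemma prob_mono_level (hp0 : ∀ ω, 0 ≤ p ω) (X : Ω → α) (Y : Ω → β) (ω : Ω)
    (h : ∀ ω', X ω' = X ω → Y ω' = Y ω) : prob p X (X ω) ≤ prob p Y (Y ω) := by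
  refine Finset.sum_le_sum fun ω' _ => ?_
  by_cases hx : X ω' = X ω
  · simp [hx, h ω' hx]
  · simp only [if_neg hx]
    split <;> simp [hp0 ω']

lemma entropy_congr [Fintype α] [Fintype β] (X : Ω → α) (Y : Ω → β)
    (h : ∀ ω ω', X ω = X ω' ↔ Y ω = Y ω') : entropy p X = entropy p Y := by
  rw [entropy_eq_sum_omega, entropy_eq_sum_omega]
  congr 1
  refine Finset.sum_congr rfl fun ω _ => ?_
  have : prob p X (X ω) = prob p Y (Y ω) := by
    refine Finset.sum_congr rfl fun ω' _ => ?_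
    rw [if_congr (h ω' ω) rfl rfl]
  rw [this]

lemma entropy_mono [Fintype α] [Fintype β] (hp : IsPMF p) (X : Ω → α) (Y : Ω → β)
    (h : ∀ ω ω', Y ω = Y ω' → X ω = X ω') : entropy p X ≤ entropy p Y := by
  rw [entropy_eq_sum_omega, entropy_eq_sum_omega]
  rw [neg_le_neg_iff]
  refine Finset.sum_le_sum fun ω _ => ?_
  rcases eq_or_lt_of_le (hp.1 ω) with h0 | h0
  · simp [← h0]
  · refine mul_le_mul_of_nonneg_left ?_ (le_of_lt h0)
    refine Real.logb_le_logb_of_le one_lt_two ?_ ?_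
    · exact lt_of_lt_of_le h0 (self_le_prob p hp.1 Y ω)
    · exact prob_mono_level p hp.1 Y X ω (fun ω' hy => h ω' ω hy)

lemma entropy_unit (hp : IsPMF p) (U : Ω → Unit) : entropy p U = 0 := by
  unfold entropy prob
  simp [eq_iff_true_of_subsingleton, hp.2]

lemma entropy_subadd [Fintype α] [Fintype β] (hp : IsPMF p) (X : Ω → α) (Y : Ω → β) :
    entropy p (fun ω => (X ω, Y ω)) ≤ entropy p X + entropy p Y := by
  have h := entropy_submodular p hp X Y (fun _ => ())
  rw [entropy_unit p hp] at h
  have e1 : entropy p (fun ω => (X ω, Y ω, ())) = entropy p (fun ω => (X ω, Y ω)) :=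
    entropy_congr p _ _ (by intro ω ω'; simp [Prod.ext_iff])
  have e2 : entropy p (fun ω => (X ω, ())) = entropy p X :=
    entropy_congr p _ _ (by intro ω ω'; simp [Prod.ext_iff])
  have e3 : entropy p (fun ω => (Y ω, ())) = entropy p Y :=
    entropy_congr p _ _ (by intro ω ω'; simp [Prod.ext_iff])
  linarith

lemma entropy_congr' [Fintype α] [Fintype β] (X : Ω → α) (Y : Ω → β)
    (h : ∀ ω ω', X ω = X ω' ↔ Y ω = Y ω') : entropy p X = entropy p Y :=
  entropy_congr p X Y h

variable {n : ℕ} {ζ : Type} [Fintype ζ]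

/-- Optionized restriction of the bit tuple to a finset. -/
def OT (V : Fin n → Ω → Bool) (S : Finset (Fin n)) (ω : Ω) : Fin n → Option Bool :=
  fun i => if i ∈ S then some (V i ω) else none

lemma OT_eq_iff (V : Fin n → Ω → Bool) (S : Finset (Fin n)) (ω ω' : Ω) :
    OT V S ω = OT V S ω' ↔ ∀ i ∈ S, V i ω = V i ω' := by
  unfold OT
  rw [funext_iff]
  constructor
  · intro h i hi
    have := h i
    simpa [hi] using this
  · intro h i
    by_cases hi : i ∈ S
    · simp [hi, h i hi]
    · simp [hi]

def gE (p : Ω → ℝ) (V : Fin n → Ω → Bool) (Z : Ω → ζ) (S : Finset (Fin n)) : ℝ :=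
  entropy p (fun ω => (Z ω, OT V S ω))

def fE (p : Ω → ℝ) (V : Fin n → Ω → Bool) (S : Finset (Fin n)) : ℝ :=
  entropy p (OT V S)

variable (V : Fin n → Ω → Bool) (Z : Ω → ζ)

lemma gE_mono (hp : IsPMF p) {S T : Finset (Fin n)} (hST : S ⊆ T) :
    gE p V Z S ≤ gE p V Z T := by
  refine entropy_mono p hp _ _ fun ω ω' h => ?_
  rw [Prod.mk.injEq] at h ⊢
  rw [OT_eq_iff] at h ⊢
  exact ⟨h.1, fun i hi => h.2 i (hST hi)⟩

lemma gE_submod (hp : IsPMF p) {S T : Finset (Fin n)} (hTS : T ⊆ S) (i : Fin n) :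
    gE p V Z (insert i S) + gE p V Z T ≤ gE p V Z (insert i T) + gE p V Z S := by
  have h := entropy_submodular p hp (V i) (OT V S) (fun ω => (Z ω, OT V T ω))
  have e1 : entropy p (fun ω => (V i ω, OT V S ω, Z ω, OT V T ω)) = gE p V Z (insert i S) := by
    refine entropy_congr p _ _ fun ω ω' => ?_
    simp only [Prod.mk.injEq, OT_eq_iff, Finset.forall_mem_insert]
    constructor
    · rintro ⟨h1, h2, h3, _⟩
      exact ⟨h3, h1, h2⟩
    · rintro ⟨h3, h1, h2⟩
      exact ⟨h1, h2, h3, fun j hj => h2 j (hTS hj)⟩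
  have e2 : entropy p (fun ω => (V i ω, Z ω, OT V T ω)) = gE p V Z (insert i T) := by
    refine entropy_congr p _ _ fun ω ω' => ?_
    simp only [Prod.mk.injEq, OT_eq_iff, Finset.forall_mem_insert]
    tauto
  have e3 : entropy p (fun ω => (OT V S ω, Z ω, OT V T ω)) = gE p V Z S := by
    refine entropy_congr p _ _ fun ω ω' => ?_
    simp only [Prod.mk.injEq, OT_eq_iff]
    constructor
    · rintro ⟨h2, h3, _⟩
      exact ⟨h3, h2⟩
    · rintro ⟨h3, h2⟩
      exact ⟨h2, h3, fun j hj => h2 j (hTS hj)⟩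
  have e4 : entropy p (fun ω => (Z ω, OT V T ω)) = gE p V Z T := rfl
  rw [e1, e2, e3, e4] at h
  linarith

lemma gE_cond_mono (hp : IsPMF p) {S T : Finset (Fin n)} (hTS : T ⊆ S) (i : Fin n) :
    gE p V Z (insert i S) - gE p V Z S ≤ gE p V Z (insert i T) - gE p V Z T := by
  have := gE_submod p V Z hp hTS i
  linarith

lemma gE_chain (T S : Finset (Fin n)) :
    gE p V Z (S ∪ T) - gE p V Z S
      = ∑ l ∈ T, (gE p V Z (insert l (S ∪ T.filter (· < l)))
          - gE p V Z (S ∪ T.filter (· < l))) := by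
  induction T using Finset.induction_on_max with
  | empty => simp
  | insert a s ha ih =>
    have hnotmem : a ∉ s := fun h => lt_irrefl a (ha a h)
    rw [Finset.sum_insert hnotmem]
    have hfa : (insert a s).filter (· < a) = s := by
      ext x
      simp only [Finset.mem_filter, Finset.mem_insert]
      constructor
      · rintro ⟨hx | hx, hlt⟩
        · exact absurd hlt (lt_irrefl a ∘ (hx ▸ id))
        · exact hx
      · intro hx
        exact ⟨Or.inr hx, ha x hx⟩
    have hfl : ∀ l ∈ s, (insert a s).filter (· < l) = s.filter (· < l) := by
      intro l hl
      ext x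
      simp only [Finset.mem_filter, Finset.mem_insert]
      constructor
      · rintro ⟨hx | hx, hlt⟩
        · exact absurd (hx ▸ hlt) (not_lt.2 (ha l hl).le)
        · exact ⟨hx, hlt⟩
      · rintro ⟨hx, hlt⟩
        exact ⟨Or.inr hx, hlt⟩
    rw [hfa]
    have hsum : ∑ l ∈ s, (gE p V Z (insert l (S ∪ (insert a s).filter (· < l)))
          - gE p V Z (S ∪ (insert a s).filter (· < l)))
        = ∑ l ∈ s, (gE p V Z (insert l (S ∪ s.filter (· < l)))
          - gE p V Z (S ∪ s.filter (· < l))) := by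
      refine Finset.sum_congr rfl fun l hl => ?_
      rw [hfl l hl]
    rw [hsum, ← ih, Finset.union_insert]
    ring

lemma prob_comp [Fintype α] (X : Ω → α) (F : α → β) (y : β) :
    prob p (fun ω => F (X ω)) y = ∑ x, if F x = y then prob p X x else 0 := by
  calc prob p (fun ω => F (X ω)) y
      = ∑ ω, p ω * (if F (X ω) = y then 1 else 0) := by
        unfold prob
        refine Finset.sum_congr rfl fun ω _ => ?_
        split <;> simp
    _ = ∑ x, prob p X x * (if F x = y then 1 else 0) :=
        (sum_prob_mul p X fun x => if F x = y then 1 else 0).symm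
    _ = ∑ x, if F x = y then prob p X x else 0 := by
        refine Finset.sum_congr rfl fun x _ => ?_
        split <;> simp

def resFiberEquiv (S : Finset (Fin n)) (y : {i : Fin n // i ∈ S} → Bool) :
    {v : Fin n → Bool // (fun i : {i : Fin n // i ∈ S} => v i.1) = y}
      ≃ ({i : Fin n // i ∉ S} → Bool) where
  toFun v i := v.1 i.1
  invFun u := ⟨fun i => if h : i ∈ S then y ⟨i, h⟩ else u ⟨i, h⟩, by
    funext i
    simp [i.2]⟩
  left_inv v := by
    apply Subtype.ext
    funext i
    by_cases h : i ∈ S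
    · simpa [h] using (congrFun v.2 ⟨i, h⟩).symm
    · simp [h]
  right_inv u := by
    funext i
    simp [i.2]

variable (hV : ∀ v : Fin n → Bool, prob p (fun ω i => V i ω) v = (1 / 2 : ℝ) ^ n)
include hV

lemma prob_restrict (S : Finset (Fin n)) (y : {i : Fin n // i ∈ S} → Bool) :
    prob p (fun ω (i : {i : Fin n // i ∈ S}) => V i.1 ω) y = (1 / 2 : ℝ) ^ S.card := by
  have hpc := prob_comp p (fun ω i => V i ω) (fun v (i : {i : Fin n // i ∈ S}) => v i.1) y
  simp only at hpc
  rw [hpc]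
  simp only [hV]
  rw [Finset.sum_ite, Finset.sum_const, Finset.sum_const_zero, add_zero]
  have hcard : (Finset.univ.filter
      fun v : Fin n → Bool => (fun i : {i : Fin n // i ∈ S} => v i.1) = y).card
      = 2 ^ (n - S.card) := by
    rw [← Fintype.card_subtype, Fintype.card_congr (resFiberEquiv S y), Fintype.card_fun,
      Fintype.card_bool, Fintype.card_subtype_compl, Fintype.card_fin]
    simp [Fintype.card_coe]
  rw [hcard, nsmul_eq_mul]
  have hk : S.card ≤ n := by
    simpa using Finset.card_le_card (Finset.subset_univ S)
  have h2 : (2:ℝ)^n = 2^(n - S.card) * 2^(S.card) := by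
    rw [← pow_add, Nat.sub_add_cancel hk]
  push_cast
  simp only [one_div, inv_pow]
  rw [h2, mul_inv, ← mul_assoc, mul_inv_cancel₀ (by positivity), one_mul]

lemma fE_val (hp : IsPMF p) (S : Finset (Fin n)) : fE p V S = S.card := by
  have e : fE p V S = entropy p (fun ω (i : {i : Fin n // i ∈ S}) => V i.1 ω) := by
    refine entropy_congr p _ _ fun ω ω' => ?_
    rw [OT_eq_iff, funext_iff]
    simp [Subtype.forall]
  rw [e]
  unfold entropy
  rw [Finset.sum_congr rfl fun y _ => by rw [prob_restrict p V hV S y]]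
  rw [Finset.sum_const, Finset.card_univ, Fintype.card_fun, Fintype.card_bool, Fintype.card_coe]
  have hlogb : Real.logb 2 ((1/2:ℝ)^S.card) = -(S.card : ℝ) := by
    rw [one_div, inv_pow, Real.logb_inv, Real.logb_pow, Real.logb_self_eq_one one_lt_two]
    ring
  rw [hlogb, nsmul_eq_mul]
  have hmul : (2:ℝ)^S.card * (1/2:ℝ)^S.card = 1 := by
    rw [← mul_pow]
    norm_num
  push_cast
  nlinarith [hmul]

omit hV

lemma gE_empty : gE p V Z ∅ = entropy p Z := by
  refine entropy_congr p _ _ fun ω ω' => ?_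
  simp [Prod.ext_iff, OT_eq_iff]

include hV in
lemma gE_subadd (hp : IsPMF p) (S : Finset (Fin n)) :
    gE p V Z S ≤ (S.card : ℝ) + gE p V Z ∅ := by
  have h := entropy_subadd p hp Z (OT V S)
  have := fE_val p V hV hp S
  unfold fE at this
  rw [gE_empty]
  unfold gE
  linarith

end S5

/-- **Corollary 4** (channel-independent form). In the secrecy-code setup, with
`I_total = I((V 1,…,V n) ; Z)`,
`I_total − r − ∑_{i∈B} C_i ≤ I(V_A ; Z ∣ V_B) ≤ I_total − r + ∑_{l∈R} (1 − C_l)`,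
where `C_i = I(V i ; (Z, V_{<i}))` and `r = |R|`. -/
theorem stmt5 {Ω : Type} [Fintype Ω] (p : Ω → ℝ) (hp : IsPMF p)
    {n : ℕ} (V : Fin n → Ω → Bool) {ζ : Type} [Fintype ζ] (Z : Ω → ζ)
    (hV : ∀ v : Fin n → Bool, prob p (fun ω i => V i ω) v = (1 / 2 : ℝ) ^ n)
    (A R B : Finset (Fin n))
    (hAR : Disjoint A R) (hAB : Disjoint A B) (hRB : Disjoint R B)
    (hcover : A ∪ R ∪ B = Finset.univ) :
    (mutInfo p (fun ω (i : Fin n) => V i ω) Z - (R.card : ℝ)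
        - ∑ i ∈ B, mutInfo p (V i)
            (fun ω => (Z ω, fun j : Fin i.val => V (Fin.castLE i.isLt.le j) ω))
      ≤ condMutInfo p (fun ω (i : {i // i ∈ A}) => V i.1 ω) Z
          (fun ω (i : {i // i ∈ B}) => V i.1 ω))
    ∧ (condMutInfo p (fun ω (i : {i // i ∈ A}) => V i.1 ω) Z
          (fun ω (i : {i // i ∈ B}) => V i.1 ω)
      ≤ mutInfo p (fun ω (i : Fin n) => V i ω) Z - (R.card : ℝ)
        + ∑ l ∈ R, (1 - mutInfo p (V l)
            (fun ω => (Z ω, fun j : Fin l.val => V (Fin.castLE l.isLt.le j) ω)))) := by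
  classical
  set c : Fin n → ℝ := fun i =>
    S5.gE p V Z (insert i (Finset.Iio i)) - S5.gE p V Z (Finset.Iio i) with hc
  -- prefix tuple characterization
  have hpref : ∀ (i : Fin n) (ω ω' : Ω),
      ((fun j : Fin i.val => V (Fin.castLE i.isLt.le j) ω)
        = (fun j : Fin i.val => V (Fin.castLE i.isLt.le j) ω'))
      ↔ ∀ j ∈ Finset.Iio i, V j ω = V j ω' := by
    intro i ω ω'
    rw [funext_iff]
    constructor
    · intro h j hj
      have hlt : j < i := Finset.mem_Iio.mp hj
      have hj' : j.val < i.val := hlt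
      have hjj : Fin.castLE i.isLt.le ⟨j.val, hj'⟩ = j := by
        apply Fin.ext
        rfl
      have := h ⟨j.val, hj'⟩
      rwa [hjj] at this
    · intro h j
      apply h
      refine Finset.mem_Iio.mpr ?_
      rw [Fin.lt_def]
      exact j.isLt
  -- value of C_i
  have e_ci : ∀ i : Fin n, mutInfo p (V i)
      (fun ω => (Z ω, fun j : Fin i.val => V (Fin.castLE i.isLt.le j) ω)) = 1 - c i := by
    intro i
    have h1 : entropy p (V i) = S5.fE p V {i} := by
      refine S5.entropy_congr p _ _ fun ω ω' => ?_
      simp [S5.OT_eq_iff]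
    have h2 : entropy p (fun ω => (Z ω, fun j : Fin i.val => V (Fin.castLE i.isLt.le j) ω))
        = S5.gE p V Z (Finset.Iio i) := by
      refine S5.entropy_congr p _ _ fun ω ω' => ?_
      simp only [Prod.mk.injEq, S5.OT_eq_iff]
      rw [hpref i ω ω']
    have h3 : entropy p (fun ω =>
        (V i ω, Z ω, fun j : Fin i.val => V (Fin.castLE i.isLt.le j) ω))
        = S5.gE p V Z (insert i (Finset.Iio i)) := by
      refine S5.entropy_congr p _ _ fun ω ω' => ?_
      simp only [Prod.mk.injEq, S5.OT_eq_iff, Finset.forall_mem_insert]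
      rw [hpref i ω ω']
      tauto
    have h4 : S5.fE p V {i} = 1 := by
      rw [S5.fE_val p V hV hp {i}]
      simp
    unfold mutInfo
    rw [h1, h2, h3, h4]
    simp only [hc]
    ring
  -- I_total
  have e_total : mutInfo p (fun ω (i : Fin n) => V i ω) Z
      = ((Finset.univ : Finset (Fin n)).card : ℝ) + S5.gE p V Z ∅ - S5.gE p V Z Finset.univ := by
    have h1 : entropy p (fun ω (i : Fin n) => V i ω) = S5.fE p V Finset.univ := by
      refine S5.entropy_congr p _ _ fun ω ω' => ?_
      simp only [S5.OT_eq_iff]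
      simp only [funext_iff, Finset.mem_univ, true_implies]
    have h2 : entropy p Z = S5.gE p V Z ∅ := (S5.gE_empty p V Z).symm
    have h3 : entropy p (fun ω => ((fun i : Fin n => V i ω), Z ω))
        = S5.gE p V Z Finset.univ := by
      refine S5.entropy_congr p _ _ fun ω ω' => ?_
      simp only [Prod.mk.injEq, S5.OT_eq_iff]
      simp only [funext_iff, Finset.mem_univ, true_implies]
      tauto
    unfold mutInfo
    rw [h1, h2, h3, S5.fE_val p V hV hp]
  -- CMI
  have e_cmi : condMutInfo p (fun ω (i : {i // i ∈ A}) => V i.1 ω) Z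
      (fun ω (i : {i // i ∈ B}) => V i.1 ω)
      = ((A ∪ B).card : ℝ) + S5.gE p V Z B - S5.gE p V Z (A ∪ B) - (B.card : ℝ) := by
    have h1 : entropy p (fun ω => ((fun i : {i // i ∈ A} => V i.1 ω),
        (fun i : {i // i ∈ B} => V i.1 ω))) = S5.fE p V (A ∪ B) := by
      refine S5.entropy_congr p _ _ fun ω ω' => ?_
      simp only [Prod.mk.injEq, S5.OT_eq_iff]
      simp only [funext_iff, Subtype.forall, Finset.mem_union]
      constructor
      · rintro ⟨h1, h2⟩ i hi
        rcases hi with hi | hi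
        · exact h1 i hi
        · exact h2 i hi
      · intro h
        exact ⟨fun i hi => h i (Or.inl hi), fun i hi => h i (Or.inr hi)⟩
    have h2 : entropy p (fun ω => (Z ω, (fun i : {i // i ∈ B} => V i.1 ω)))
        = S5.gE p V Z B := by
      refine S5.entropy_congr p _ _ fun ω ω' => ?_
      simp only [Prod.mk.injEq, S5.OT_eq_iff]
      simp only [funext_iff, Subtype.forall]
    have h3 : entropy p (fun ω => ((fun i : {i // i ∈ A} => V i.1 ω), Z ω,
        (fun i : {i // i ∈ B} => V i.1 ω))) = S5.gE p V Z (A ∪ B) := by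
      refine S5.entropy_congr p _ _ fun ω ω' => ?_
      simp only [Prod.mk.injEq, S5.OT_eq_iff]
      simp only [funext_iff, Subtype.forall, Finset.mem_union]
      constructor
      · rintro ⟨h1, h2, h3⟩
        refine ⟨h2, fun i hi => ?_⟩
        rcases hi with hi | hi
        · exact h1 i hi
        · exact h3 i hi
      · rintro ⟨h2, h⟩
        exact ⟨fun i hi => h i (Or.inl hi), h2, fun i hi => h i (Or.inr hi)⟩
    have h4 : entropy p (fun ω (i : {i // i ∈ B}) => V i.1 ω) = S5.fE p V B := by
      refine S5.entropy_congr p _ _ fun ω ω' => ?_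
      constructor
      · intro h
        rw [S5.OT_eq_iff]
        intro i hi
        exact congrFun h ⟨i, hi⟩
      · intro h
        funext i
        exact (S5.OT_eq_iff V B ω ω').mp h i.1 i.2
    unfold condMutInfo
    rw [h1, h2, h3, h4, S5.fE_val p V hV hp, S5.fE_val p V hV hp]
  -- chain over B
  have hlow1 : ∑ i ∈ B, c i ≤ S5.gE p V Z B - S5.gE p V Z ∅ := by
    have hchB := S5.gE_chain p V Z B ∅
    simp only [Finset.empty_union] at hchB
    rw [hchB]
    refine Finset.sum_le_sum fun i hi => ?_
    refine S5.gE_cond_mono p V Z hp ?_ i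
    intro j hj
    exact Finset.mem_Iio.mpr (Finset.mem_filter.mp hj).2
  -- chain over R
  have hUnion : (A ∪ B) ∪ R = Finset.univ := by
    rw [← hcover]
    ext x
    simp only [Finset.mem_union]
    tauto
  have hup1 : S5.gE p V Z Finset.univ - S5.gE p V Z (A ∪ B) ≤ ∑ l ∈ R, c l := by
    have hchR := S5.gE_chain p V Z R (A ∪ B)
    rw [hUnion] at hchR
    rw [hchR]
    refine Finset.sum_le_sum fun l hl => ?_
    refine S5.gE_cond_mono p V Z hp ?_ l
    intro j hj
    have hj' : j < l := Finset.mem_Iio.mp hj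
    have hju : j ∈ A ∪ R ∪ B := hcover ▸ Finset.mem_univ j
    rcases Finset.mem_union.mp hju with h' | hB'
    · rcases Finset.mem_union.mp h' with hA' | hR'
      · exact Finset.mem_union_left _ (Finset.mem_union_left _ hA')
      · exact Finset.mem_union_right _ (Finset.mem_filter.mpr ⟨hR', hj'⟩)
    · exact Finset.mem_union_left _ (Finset.mem_union_right _ hB')
  have hmono : S5.gE p V Z (A ∪ B) ≤ S5.gE p V Z Finset.univ :=
    S5.gE_mono p V Z hp (Finset.subset_univ _)
  have hsub : S5.gE p V Z B ≤ (B.card : ℝ) + S5.gE p V Z ∅ :=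
    S5.gE_subadd p V Z hV hp B
  -- cardinalities
  have hdisj : Disjoint (A ∪ R) B := Finset.disjoint_union_left.mpr ⟨hAB, hRB⟩
  have hcardU : ((Finset.univ : Finset (Fin n)).card : ℝ)
      = (A.card : ℝ) + (R.card : ℝ) + (B.card : ℝ) := by
    rw [← hcover, Finset.card_union_of_disjoint hdisj, Finset.card_union_of_disjoint hAR]
    push_cast
    ring
  have hcardAB : (((A ∪ B).card : ℕ) : ℝ) = (A.card : ℝ) + (B.card : ℝ) := by
    rw [Finset.card_union_of_disjoint hAB]
    push_cast
    ring
  -- sum conversions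
  have hBsum : ∑ i ∈ B, mutInfo p (V i)
      (fun ω => (Z ω, fun j : Fin i.val => V (Fin.castLE i.isLt.le j) ω))
      = (B.card : ℝ) - ∑ i ∈ B, c i := by
    rw [Finset.sum_congr rfl fun i _ => e_ci i, Finset.sum_sub_distrib,
      Finset.sum_const, nsmul_eq_mul, mul_one]
  have hRsum : ∑ l ∈ R, (1 - mutInfo p (V l)
      (fun ω => (Z ω, fun j : Fin l.val => V (Fin.castLE l.isLt.le j) ω)))
      = ∑ l ∈ R, c l := by
    refine Finset.sum_congr rfl fun l _ => ?_
    rw [e_ci l]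
    ring
  constructor
  · rw [e_total, e_cmi, hBsum]
    linarith [hlow1, hmono, hcardU, hcardAB]
  · rw [e_total, e_cmi, hRsum]
    linarith [hup1, hsub, hcardU, hcardAB]
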